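/- Let G be a finitely generated solvable minimax group with trivial finite residual. Then G has a non-trivial torsion-free abelian normal subgroup. -/

import Mathlib

open scoped Pointwise

/-- A factor group satisfies the maximal condition on subgroups iff every subgroup is
finitely generated. -/
def MaxCond (Q : Type*) [Group Q] : Prop := ∀ K : Subgroup Q, K.FG

/-- The minimal condition on subgroups: every descending chain of subgroups stabilizes. -/
def MinCond (Q : Type*) [Group Q] : Prop :=
  ∀ f : ℕ → Subgroup Q, (∀ k, f (k + 1) ≤ f k) → ∃ N, ∀ m, N ≤ m → f m = f N

/-- `G` is minimax: it has a finite subnormal series whose factors satisfy max or min. -/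
def Minimax (G : Type*) [Group G] : Prop :=
  ∃ (len : ℕ) (c : Fin (len + 1) → Subgroup G),
    c 0 = ⊥ ∧ c (Fin.last len) = ⊤ ∧ (∀ i : Fin len, c i.castSucc ≤ c i.succ) ∧
    ∀ i : Fin len, ∃ h : ((c i.castSucc).subgroupOf (c i.succ)).Normal,
      letI := h
      MaxCond (c i.succ ⧸ (c i.castSucc).subgroupOf (c i.succ)) ∨
      MinCond (c i.succ ⧸ (c i.castSucc).subgroupOf (c i.succ))

section Helpers

variable {G : Type*} [Group G]

namespace ResFinAux

lemma exists_eventually_const_of_antitone (u : ℕ → ℕ) (hu : ∀ k, u (k+1) ≤ u k) :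
    ∃ N, ∀ m, N ≤ m → u m = u N := by
  have ha : Antitone u := antitone_nat_of_succ_le hu
  obtain ⟨v, ⟨N, rfl⟩, hmin⟩ := Nat.lt_wfRel.wf.has_min (Set.range u) ⟨u 0, 0, rfl⟩
  exact ⟨N, fun m hm => le_antisymm (ha hm) (not_lt.mp (hmin (u m) ⟨m, rfl⟩))⟩

lemma resfin_pointwise (hres : (⨅ (H : Subgroup G) (_ : H.FiniteIndex), H) = ⊥)
    {g : G} (hg : g ≠ 1) : ∃ H : Subgroup G, H.FiniteIndex ∧ g ∉ H := by
  by_contra hcon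
  push_neg at hcon
  apply hg
  have : g ∈ (⨅ (H : Subgroup G) (_ : H.FiniteIndex), H) := by
    simp only [Subgroup.mem_iInf]; exact fun H hH => hcon H hH
  rw [hres] at this; simpa [Subgroup.mem_bot] using this

lemma finite_of_inf_finiteIndex_eq_bot (T K : Subgroup G) (hK : K.FiniteIndex)
    (h : T ⊓ K = ⊥) : Finite T := by
  haveI := hK
  have hinj : Function.Injective (fun t : T => (QuotientGroup.mk (t : G) : G ⧸ K)) := by
    intro t₁ t₂ ht
    have hk : (t₁ : G)⁻¹ * t₂ ∈ K := QuotientGroup.eq.mp ht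
    have h2 : (t₁ : G)⁻¹ * (t₂ : G) ∈ T ⊓ K :=
      Subgroup.mem_inf.mpr ⟨T.mul_mem (T.inv_mem t₁.2) t₂.2, hk⟩
    rw [h, Subgroup.mem_bot] at h2
    ext; exact (inv_mul_eq_one.mp h2)
  exact Finite.of_injective _ hinj

lemma finite_of_stab_of_resfin (T : Subgroup G)
    (hres : (⨅ (H : Subgroup G) (_ : H.FiniteIndex), H) = ⊥)
    (hstab : ∀ f : ℕ → Subgroup G, (∀ k, f (k+1) ≤ f k) → (∀ k, f k ≤ T) →
      ∃ N, ∀ m, N ≤ m → f m = f N) : Finite T := by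
  by_contra hfin
  have step : ∀ K : Subgroup G, K.FiniteIndex →
      ∃ K' : Subgroup G, K'.FiniteIndex ∧ K' ≤ K ∧ T ⊓ K' < T ⊓ K := by
    intro K hK
    have hbot : T ⊓ K ≠ ⊥ := by
      intro hb
      exact hfin (finite_of_inf_finiteIndex_eq_bot T K hK hb)
    obtain ⟨a, ha, hane⟩ := (T ⊓ K).bot_or_exists_ne_one.resolve_left hbot
    obtain ⟨H, hHfi, haH⟩ := resfin_pointwise hres hane
    refine ⟨K ⊓ H, ?_, inf_le_left, ?_⟩
    · haveI := hK; haveI := hHfi; infer_instance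
    · refine lt_of_le_of_ne (inf_le_inf_left T inf_le_left) (fun he => haH ?_)
      rw [← he] at ha
      exact ha.2.2
  let g : ℕ → {K : Subgroup G // K.FiniteIndex} := fun n =>
    Nat.rec ⟨⊤, Subgroup.instFiniteIndexTop⟩
      (fun _ p => ⟨(step p.1 p.2).choose, (step p.1 p.2).choose_spec.1⟩) n
  have hglt : ∀ k, T ⊓ (g (k+1)).1 < T ⊓ (g k).1 := fun k =>
    (step (g k).1 (g k).2).choose_spec.2.2
  obtain ⟨N, hN⟩ := hstab (fun k => T ⊓ (g k).1) (fun k => (hglt k).le)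
    (fun k => inf_le_left)
  exact absurd (hN (N+1) (Nat.le_succ N)) (hglt N).ne

lemma finite_of_fg_torsion_comm {Q : Type*} [Group Q] (S : Subgroup Q) (hfg : S.FG)
    (hcomm : ∀ x ∈ S, ∀ y ∈ S, x * y = y * x)
    (htor : ∀ x ∈ S, ∃ n : ℕ, 0 < n ∧ x ^ n = 1) : Finite S := by
  letI cg : CommGroup S :=
    { (inferInstance : Group S) with
      mul_comm := fun a b => Subtype.ext (hcomm a a.2 b b.2) }
  haveI : Group.FG S := (Group.fg_iff_subgroup_fg S).mpr hfg
  apply CommGroup.finite_of_fg_torsion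
  intro x
  obtain ⟨n, hn, hx⟩ := htor x x.2
  exact isOfFinOrder_iff_pow_eq_one.mpr ⟨n, hn, Subtype.ext (by push_cast [hx]; simp [hx])⟩

lemma stab_of_le_finite {Q : Type*} [Group Q] (S : Subgroup Q) (hS : Finite S)
    (f : ℕ → Subgroup Q) (hdesc : ∀ k, f (k+1) ≤ f k) (hle : ∀ k, f k ≤ S) :
    ∃ N, ∀ m, N ≤ m → f m = f N := by
  have hant : Antitone f := antitone_nat_of_succ_le hdesc
  haveI : ∀ k, Finite (f k) := fun k => Finite.of_injective _ (Subgroup.inclusion_injective (hle k))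
  have hcard : ∀ k, Nat.card (f (k+1)) ≤ Nat.card (f k) := by
    intro k
    exact Nat.card_le_card_of_injective _ (Subgroup.inclusion_injective (hdesc k))
  obtain ⟨N, hN⟩ := exists_eventually_const_of_antitone (fun k => Nat.card (f k)) hcard
  refine ⟨N, fun m hm => ?_⟩
  exact Subgroup.eq_of_le_of_card_ge (hant hm) (le_of_eq (hN m hm).symm)

/-- In a minimax group, descending chains of subgroups below a torsion abelian
subgroup stabilize. -/
lemma stab_below_torsion (hmm : Minimax G) (T : Subgroup G)
    (hcomm : ∀ x ∈ T, ∀ y ∈ T, x * y = y * x)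
    (htor : ∀ x ∈ T, ∃ n : ℕ, 0 < n ∧ x ^ n = 1) :
    ∀ f : ℕ → Subgroup G, (∀ k, f (k+1) ≤ f k) → (∀ k, f k ≤ T) →
      ∃ N, ∀ m, N ≤ m → f m = f N := by
  obtain ⟨len, c, hc0, hclast, hmono, hfac⟩ := hmm
  suffices h : ∀ i : Fin (len + 1), ∀ f : ℕ → Subgroup G,
      (∀ k, f (k+1) ≤ f k) → (∀ k, f k ≤ T ⊓ c i) → ∃ N, ∀ m, N ≤ m → f m = f N by
    intro f hdesc hle
    exact h (Fin.last len) f hdesc (fun k => le_inf (hle k) (by rw [hclast]; exact le_top))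
  intro i
  induction i using Fin.induction with
  | zero =>
    intro f hdesc hle
    refine ⟨0, fun m _ => ?_⟩
    have hb : ∀ k, f k = ⊥ := fun k =>
      le_bot_iff.mp (by simpa [hc0] using (hle k).trans inf_le_right)
    rw [hb m, hb 0]
  | succ i IH =>
    intro f hdesc hle
    obtain ⟨hnorm, hcase⟩ := hfac i
    letI := hnorm
    set Ni := (c i.castSucc).subgroupOf (c i.succ) with hNi
    let π := QuotientGroup.mk' Ni
    let F : ℕ → Subgroup (c i.succ ⧸ Ni) := fun k => ((f k).subgroupOf (c i.succ)).map π
    have hFdesc : ∀ k, F (k+1) ≤ F k := fun k =>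
      Subgroup.map_mono ((fun h => Subgroup.comap_mono h) ((hdesc k)))
    have hFstab : ∃ N₁, ∀ m, N₁ ≤ m → F m = F N₁ := by
      rcases hcase with hmax | hmin
      · set S : Subgroup (c i.succ ⧸ Ni) := ((T ⊓ c i.succ).subgroupOf (c i.succ)).map π with hS
        have hFle : ∀ k, F k ≤ S := fun k =>
          Subgroup.map_mono ((fun h => Subgroup.comap_mono h) (le_inf (hle k |>.trans inf_le_left)
            (hle k |>.trans inf_le_right)))
        have hSfin : Finite S := by
          apply finite_of_fg_torsion_comm S (hmax S)
          · rintro x ⟨x', hx', rfl⟩ y ⟨y', hy', rfl⟩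
            rw [← map_mul, ← map_mul]
            congr 1
            ext
            exact hcomm _ (Subgroup.mem_subgroupOf.mp hx').1 _ (Subgroup.mem_subgroupOf.mp hy').1
          · rintro x ⟨x', hx', rfl⟩
            obtain ⟨n, hn, hxn⟩ := htor _ (Subgroup.mem_subgroupOf.mp hx').1
            exact ⟨n, hn, by rw [← map_pow]; convert map_one π using 2; ext; exact hxn⟩
        exact stab_of_le_finite S hSfin F hFdesc hFle
      · exact hmin F hFdesc
    obtain ⟨N₁, hN₁⟩ := hFstab
    obtain ⟨N₂, hN₂⟩ := IH (fun k => f k ⊓ c i.castSucc)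
      (fun k => inf_le_inf_right _ (hdesc k))
      (fun k => le_inf (inf_le_left.trans ((hle k).trans inf_le_left)) inf_le_right)
    have hant : Antitone f := antitone_nat_of_succ_le hdesc
    refine ⟨max N₁ N₂, fun m hm => ?_⟩
    set N := max N₁ N₂ with hNdef
    refine le_antisymm (hant hm) ?_
    intro x hx
    have hxsucc : x ∈ c i.succ := ((hle N).trans inf_le_right) hx
    have hmem : π ⟨x, hxsucc⟩ ∈ F N :=
      Subgroup.mem_map.mpr ⟨⟨x, hxsucc⟩, Subgroup.mem_subgroupOf.mpr hx, rfl⟩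
    have hFNm : F N = F m := by
      rw [hN₁ N (le_max_left _ _), hN₁ m ((le_max_left _ _).trans hm)]
    rw [hFNm] at hmem
    obtain ⟨y', hy', hyeq⟩ := Subgroup.mem_map.mp hmem
    have hNimem : y'⁻¹ * ⟨x, hxsucc⟩ ∈ Ni := QuotientGroup.eq.mp hyeq
    have hz : (y' : G)⁻¹ * x ∈ c i.castSucc := by
      have := Subgroup.mem_subgroupOf.mp hNimem
      simpa using this
    have hym : (y' : G) ∈ f m := Subgroup.mem_subgroupOf.mp hy'
    have hyN : (y' : G) ∈ f N := hant hm hym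
    have hzfN : (y' : G)⁻¹ * x ∈ f N ⊓ c i.castSucc :=
      Subgroup.mem_inf.mpr ⟨(f N).mul_mem ((f N).inv_mem hyN) hx, hz⟩
    have hstab2 : f N ⊓ c i.castSucc = f m ⊓ c i.castSucc := by
      rw [hN₂ N (le_max_right _ _), hN₂ m ((le_max_right _ _).trans hm)]
    rw [hstab2] at hzfN
    have hxeq : x = (y' : G) * ((y' : G)⁻¹ * x) := by group
    rw [hxeq]
    exact (f m).mul_mem hym (Subgroup.mem_inf.mp hzfN).1

lemma Subgroup.fg_map' {Q R : Type*} [Group Q] [Group R] {K : Subgroup Q} (θ : Q →* R)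
    (h : K.FG) : (K.map θ).FG := by
  classical
  obtain ⟨S, hS⟩ := h
  refine ⟨S.image θ, ?_⟩
  rw [Finset.coe_image, ← MonoidHom.map_closure, hS]

lemma maxCond_of_surjective {Q R : Type*} [Group Q] [Group R] (θ : Q →* R)
    (hθ : Function.Surjective θ) (h : MaxCond Q) : MaxCond R := by
  intro K
  rw [← Subgroup.map_comap_eq_self_of_surjective hθ K]
  exact Subgroup.fg_map' θ (h _)

lemma minCond_of_surjective {Q R : Type*} [Group Q] [Group R] (θ : Q →* R)
    (hθ : Function.Surjective θ) (h : MinCond Q) : MinCond R := by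
  intro f hdesc
  obtain ⟨N, hN⟩ := h (fun k => (f k).comap θ) (fun k => Subgroup.comap_mono (hdesc k))
  refine ⟨N, fun m hm => ?_⟩
  rw [← Subgroup.map_comap_eq_self_of_surjective hθ (f m),
    ← Subgroup.map_comap_eq_self_of_surjective hθ (f N), hN m hm]

lemma minimax_of_surjective {Q R : Type*} [Group Q] [Group R] (θ : Q →* R)
    (hθ : Function.Surjective θ) (hmm : Minimax Q) : Minimax R := by
  obtain ⟨len, c, hc0, hclast, hmono, hfac⟩ := hmm
  refine ⟨len, fun i => (c i).map θ, by show (c 0).map θ = ⊥; rw [hc0, Subgroup.map_bot],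
    by show (c (Fin.last len)).map θ = ⊤; rw [hclast, Subgroup.map_top_of_surjective θ hθ],
    fun i => Subgroup.map_mono (hmono i), fun i => ?_⟩
  obtain ⟨hnorm, hcase⟩ := hfac i
  letI := hnorm
  set Ni := (c i.castSucc).subgroupOf (c i.succ) with hNi
  set Nbar := (((c i.castSucc).map θ).subgroupOf ((c i.succ).map θ)) with hNbar
  have hnormbar : Nbar.Normal := by
    constructor
    rintro n hn g
    obtain ⟨a, ha, hae⟩ := Subgroup.mem_map.mp (Subgroup.mem_subgroupOf.mp hn)
    obtain ⟨x, hx, hxe⟩ := Subgroup.mem_map.mp g.2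
    rw [Subgroup.mem_subgroupOf]
    have key : (⟨x, hx⟩ : c i.succ) * ⟨a, hmono i ha⟩ * (⟨x, hx⟩ : c i.succ)⁻¹ ∈ Ni :=
      hnorm.conj_mem _ (Subgroup.mem_subgroupOf.mpr ha) _
    have hmem2 : x * a * x⁻¹ ∈ c i.castSucc := Subgroup.mem_subgroupOf.mp key
    refine Subgroup.mem_map.mpr ⟨x * a * x⁻¹, hmem2, ?_⟩
    push_cast
    rw [map_mul, map_mul, map_inv, hae, hxe]
  refine ⟨hnormbar, ?_⟩
  letI := hnormbar
  let ψ := θ.subgroupMap (c i.succ)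
  let χ := (QuotientGroup.mk' Nbar).comp ψ
  have hker : Ni ≤ χ.ker := by
    intro x hx
    have hmem : ψ x ∈ Nbar := by
      rw [hNbar, Subgroup.mem_subgroupOf]
      exact Subgroup.mem_map.mpr ⟨(x : Q), Subgroup.mem_subgroupOf.mp hx, rfl⟩
    simpa [χ, MonoidHom.mem_ker, QuotientGroup.eq_one_iff] using hmem
  let Θ := QuotientGroup.lift Ni χ hker
  have hΘsurj : Function.Surjective Θ := by
    intro q
    obtain ⟨ybar, rfl⟩ := QuotientGroup.mk'_surjective Nbar q
    obtain ⟨y, rfl⟩ := θ.subgroupMap_surjective (c i.succ) ybar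
    exact ⟨QuotientGroup.mk y, rfl⟩
  rcases hcase with hmax | hmin
  · exact Or.inl (maxCond_of_surjective Θ hΘsurj hmax)
  · exact Or.inr (minCond_of_surjective Θ hΘsurj hmin)

lemma quotient_infinite_of_finite (A : Subgroup G) (hA : Finite A) (h : Infinite G) :
    Infinite (G ⧸ A) := by
  by_contra hfin
  rw [not_infinite_iff_finite] at hfin
  haveI := hfin
  haveI : Finite ((G ⧸ A) × ↥A) := inferInstance
  exact (Finite.of_equiv ((G ⧸ A) × ↥A)
    (Subgroup.groupEquivQuotientProdSubgroup (α := G) (s := A)).symm).not_infinite h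

lemma resfin_quotient (A : Subgroup G) [A.Normal] (hA : Finite A)
    (hres : (⨅ (H : Subgroup G) (_ : H.FiniteIndex), H) = ⊥) :
    (⨅ (H : Subgroup (G ⧸ A)) (_ : H.FiniteIndex), H) = ⊥ := by
  rw [eq_bot_iff]
  intro q hq
  rw [Subgroup.mem_bot]
  by_contra hne
  obtain ⟨g, rfl⟩ := QuotientGroup.mk'_surjective A q
  have hgA : g ∉ A := by
    intro hgA
    exact hne ((QuotientGroup.eq_one_iff g).mpr hgA)
  have hL : ∃ L : Subgroup G, L.FiniteIndex ∧ A ≤ L ∧ g ∉ L := by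
    let ι := {a : A // (a : G) ≠ 1}
    haveI : Finite ι := Subtype.finite
    let Hsel : ι → Subgroup G := fun a =>
      (resfin_pointwise hres a.2).choose.normalCore
    haveI hHfi : ∀ a : ι, (Hsel a).FiniteIndex := fun a => by
      haveI := (resfin_pointwise hres a.2).choose_spec.1
      exact Subgroup.finiteIndex_normalCore _
    haveI hHnorm : ∀ a : ι, (Hsel a).Normal := fun a => Subgroup.normalCore_normal _
    let K := ⨅ a : ι, Hsel a
    haveI hKfi : K.FiniteIndex := Subgroup.finiteIndex_iInf hHfi
    haveI hKnorm : K.Normal := by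
      constructor
      intro n hn x
      rw [Subgroup.mem_iInf] at hn ⊢
      exact fun a => (hHnorm a).conj_mem n (hn a) x
    have hKA : K ⊓ A = ⊥ := by
      rw [eq_bot_iff]
      intro x hx
      rw [Subgroup.mem_bot]
      by_contra hxne
      have hxA : x ∈ A := (Subgroup.mem_inf.mp hx).2
      have hxK : x ∈ K := (Subgroup.mem_inf.mp hx).1
      have helt : ((⟨x, hxA⟩ : A) : G) ≠ 1 := hxne
      have hnotin : x ∉ (resfin_pointwise hres helt).choose :=
        (resfin_pointwise hres helt).choose_spec.2
      exact hnotin (Subgroup.normalCore_le _ ((Subgroup.mem_iInf.mp hxK) ⟨⟨x, hxA⟩, helt⟩))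
    by_cases hgKA : g ∈ K ⊔ A
    · have hset : g ∈ (K : Set G) * (A : Set G) := by
        rw [← Subgroup.mul_normal K A]; exact hgKA
      obtain ⟨k, hk, a, ha, hka⟩ := hset
      have hkne : k ≠ 1 := by
        rintro rfl; simp only [one_mul] at hka; exact hgA (hka ▸ ha)
      obtain ⟨W, hWfi, hkW⟩ := resfin_pointwise hres hkne
      refine ⟨(W ⊓ K) ⊔ A, ?_, le_sup_right, ?_⟩
      · haveI := hWfi
        exact Subgroup.finiteIndex_of_le le_sup_left
      · intro hgL
        have hset2 : g ∈ ((W ⊓ K : Subgroup G) : Set G) * (A : Set G) := by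
          rw [← Subgroup.mul_normal]; exact hgL
        obtain ⟨w, hw, b, hb, hwb⟩ := hset2
        have hwK : w ∈ K := (Subgroup.mem_inf.mp hw).2
        have hwW : w ∈ W := (Subgroup.mem_inf.mp hw).1
        have hmemKA : w⁻¹ * k ∈ K ⊓ A := by
          rw [Subgroup.mem_inf]
          constructor
          · exact K.mul_mem (K.inv_mem hwK) hk
          · have h' : w * b = k * a := hwb.trans hka.symm
            have hk' : k = w * (b * a⁻¹) := by
              rw [← mul_assoc, h']; group
            have hrw : w⁻¹ * k = b * a⁻¹ := by rw [hk']; group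
            rw [hrw]
            exact A.mul_mem hb (A.inv_mem ha)
        rw [hKA, Subgroup.mem_bot, inv_mul_eq_one] at hmemKA
        exact hkW (hmemKA ▸ hwW)
    · exact ⟨K ⊔ A, by haveI := hKfi; exact Subgroup.finiteIndex_of_le le_sup_left,
        le_sup_right, hgKA⟩
  obtain ⟨L, hLfi, hAL, hgL⟩ := hL
  have hcomap : Subgroup.comap (QuotientGroup.mk' A) (L.map (QuotientGroup.mk' A)) = L := by
    rw [Subgroup.comap_map_eq, QuotientGroup.ker_mk']
    exact sup_eq_left.mpr hAL
  have hfi : (L.map (QuotientGroup.mk' A)).FiniteIndex := by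
    constructor
    rw [← Subgroup.index_comap_of_surjective _ (QuotientGroup.mk'_surjective A), hcomap]
    exact hLfi.index_ne_zero
  have hmem : QuotientGroup.mk' A g ∈ L.map (QuotientGroup.mk' A) := by
    have := Subgroup.mem_iInf.mp hq (L.map (QuotientGroup.mk' A))
    rw [Subgroup.mem_iInf] at this
    exact this hfi
  rw [← hcomap] at hgL
  exact hgL hmem

/-- the subgroup of `e`-th powers of a subgroup whose elements commute -/
def powSub (U : Subgroup G) (e : ℕ)
    (hcomm : ∀ x ∈ U, ∀ y ∈ U, x * y = y * x) : Subgroup G where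
  carrier := (fun x => x ^ e) '' (U : Set G)
  one_mem' := ⟨1, U.one_mem, one_pow e⟩
  mul_mem' := by
    rintro _ _ ⟨x, hx, rfl⟩ ⟨y, hy, rfl⟩
    refine ⟨x * y, U.mul_mem hx hy, ?_⟩
    show (x * y) ^ e = x ^ e * y ^ e
    exact Commute.mul_pow (hcomm x hx y hy) e
  inv_mem' := by
    rintro _ ⟨x, hx, rfl⟩
    refine ⟨x⁻¹, U.inv_mem hx, ?_⟩
    show x⁻¹ ^ e = (x ^ e)⁻¹
    rw [inv_pow]

lemma powSub_mem {U : Subgroup G} {e : ℕ} {hcomm : ∀ x ∈ U, ∀ y ∈ U, x * y = y * x}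
    {y : G} : y ∈ powSub U e hcomm ↔ ∃ x ∈ U, x ^ e = y := Iff.rfl

lemma powSub_le {U : Subgroup G} {e : ℕ} {hcomm : ∀ x ∈ U, ∀ y ∈ U, x * y = y * x} :
    powSub U e hcomm ≤ U := by
  rintro _ ⟨x, hx, rfl⟩
  exact U.pow_mem hx e

lemma powSub_normal {U : Subgroup G} (hU : U.Normal) {e : ℕ}
    {hcomm : ∀ x ∈ U, ∀ y ∈ U, x * y = y * x} : (powSub U e hcomm).Normal := by
  constructor
  rintro _ ⟨x, hx, rfl⟩ g
  refine ⟨g * x * g⁻¹, hU.conj_mem x hx g, ?_⟩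
  show (g * x * g⁻¹) ^ e = g * x ^ e * g⁻¹
  rw [conj_pow]

lemma normal_centralizer_inf {N P : Subgroup G} (hN : N.Normal) (hP : P.Normal) :
    (Subgroup.centralizer (N : Set G) ⊓ P).Normal := by
  constructor
  rintro n hn g
  rw [Subgroup.mem_inf] at hn ⊢
  constructor
  · rw [Subgroup.mem_centralizer_iff]
    intro h hh
    have h1 : g⁻¹ * h * g ∈ N := by
      have := hN.conj_mem h hh g⁻¹
      simpa using this
    have ha : (g⁻¹ * h * g) * n = n * (g⁻¹ * h * g) :=
      Subgroup.mem_centralizer_iff.mp hn.1 _ h1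
    calc h * (g * n * g⁻¹) = g * ((g⁻¹ * h * g) * n) * g⁻¹ := by group
      _ = g * (n * (g⁻¹ * h * g)) * g⁻¹ := by rw [ha]
      _ = g * n * g⁻¹ * h := by group
  · exact hP.conj_mem n hn.2 g

lemma infinite_subgroup_of_torsionfree {B : Subgroup G} {b : G} (hb : b ∈ B) (hbne : b ≠ 1)
    (htf : ∀ a ∈ B, ∀ k : ℕ, 0 < k → a ^ k = 1 → a = 1) : Infinite B := by
  have key : ∀ m n : ℕ, m < n → b ^ m ≠ b ^ n := by
    intro m n hmn he
    have hone : b ^ (n - m) = 1 := by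
      have h1 : b ^ m * b ^ (n - m) = b ^ n := by
        rw [← pow_add]
        congr 1
        omega
      rw [← he] at h1
      exact mul_left_cancel (h1.trans (mul_one _).symm)
    exact hbne (htf b hb (n - m) (by omega) hone)
  refine Infinite.of_injective (fun n : ℕ => (⟨b ^ n, B.pow_mem hb n⟩ : B)) ?_
  intro m n hmn
  simp only [Subtype.mk.injEq] at hmn
  rcases lt_trichotomy m n with h | h | h
  · exact absurd hmn (key m n h)
  · exact h
  · exact absurd hmn.symm (key n m h)

lemma pow_card_of_mem {A : Subgroup G} [Finite A] {a : G} (ha : a ∈ A) :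
    a ^ (Nat.card A) = 1 := by
  have : (⟨a, ha⟩ : A) ^ (Nat.card A) = 1 := pow_card_eq_one'
  have h2 := congrArg (Subtype.val) this
  push_cast at h2
  exact h2

end ResFinAux

end Helpers

open ResFinAux commutatorElement in
/-- main induction on the derived length -/
lemma resfin_key : ∀ (d : ℕ) (G : Type u) [Group G], Minimax G → Infinite G →
    ((⨅ (H : Subgroup G) (_ : H.FiniteIndex), H) = ⊥) → derivedSeries G d = ⊥ →
    ∃ A : Subgroup G, A ≠ ⊥ ∧ A.Normal ∧ (∀ a ∈ A, ∀ b ∈ A, a * b = b * a) ∧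
      ∀ a ∈ A, ∀ k : ℕ, 0 < k → a ^ k = 1 → a = 1 := by
  intro d
  induction d using Nat.strong_induction_on with
  | _ d IH =>
  intro G _ hmm hinf hres hder
  classical
  haveI : Nontrivial G := inferInstance
  have htopbot : (⊤ : Subgroup G) ≠ ⊥ := by
    intro h
    obtain ⟨x, hx⟩ := exists_ne (1 : G)
    exact hx (by rw [← Subgroup.mem_bot, ← h]; trivial)
  have hex : ∃ j, derivedSeries G j = ⊥ := ⟨d, hder⟩
  set j := Nat.find hex with hj
  have hjbot : derivedSeries G j = ⊥ := Nat.find_spec hex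
  have hjpos : 0 < j := by
    rcases Nat.eq_zero_or_pos j with h0 | h
    · exfalso
      rw [h0, derivedSeries_zero] at hjbot
      exact htopbot hjbot
    · exact h
  set A := derivedSeries G (j - 1) with hA
  have hAsucc : j - 1 + 1 = j := Nat.succ_pred_eq_of_pos hjpos
  have hAne : A ≠ ⊥ := Nat.find_min hex (by omega : j - 1 < j)
  haveI hAnorm : A.Normal := derivedSeries_normal G (j - 1)
  have hAcomm : ∀ a ∈ A, ∀ b ∈ A, a * b = b * a := by
    intro a ha b hb
    have hc : ⁅a, b⁆ ∈ derivedSeries G j := by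
      rw [← hAsucc, derivedSeries_succ]
      exact Subgroup.commutator_mem_commutator ha hb
    rw [hjbot, Subgroup.mem_bot] at hc
    exact commutatorElement_eq_one_iff_commute.mp hc
  by_cases htor : ∀ a ∈ A, ∃ n : ℕ, 0 < n ∧ a ^ n = 1
  · -- `A` is torsion, hence finite; pass to the quotient
    haveI hAfin : Finite A :=
      finite_of_stab_of_resfin A hres (stab_below_torsion hmm A hAcomm htor)
    set φ := QuotientGroup.mk' A with hφ
    have hφsurj : Function.Surjective φ := QuotientGroup.mk'_surjective A
    have hmmQ : Minimax (G ⧸ A) := minimax_of_surjective φ hφsurj hmm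
    haveI hinfQ : Infinite (G ⧸ A) := quotient_infinite_of_finite A hAfin hinf
    have hresQ := resfin_quotient A hAfin hres
    have hderQ : derivedSeries (G ⧸ A) (j - 1) = ⊥ := by
      rw [← map_derivedSeries_eq hφsurj (j - 1), ← hA,
        Subgroup.map_eq_bot_iff, QuotientGroup.ker_mk']
    have hlt : j - 1 < d := by
      have hle : j ≤ d := Nat.find_le hder
      have : derivedSeries G 0 ≠ ⊥ := by
        rw [derivedSeries_zero]; exact htopbot
      have hd0 : d ≠ 0 := by rintro rfl; exact this hder
      omega
    obtain ⟨B, hBne, hBnorm, hBcomm, hBtf⟩ := IH (j - 1) hlt (G ⧸ A) hmmQ hinfQ hresQ hderQ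
    -- pull back and extract a torsion-free abelian normal subgroup
    set P := Subgroup.comap φ B with hP
    haveI hPnorm : P.Normal := hBnorm.comap φ
    have hAP : A ≤ P := by
      intro x hx
      show φ x ∈ B
      have h1 : φ x = 1 := (QuotientGroup.eq_one_iff x).mpr hx
      rw [h1]; exact B.one_mem
    obtain ⟨bb, hbbB, hbbne⟩ := B.bot_or_exists_ne_one.resolve_left hBne
    haveI hBinf : Infinite B := infinite_subgroup_of_torsionfree hbbB hbbne hBtf
    set ψ := (MulAut.conjNormal : G →* MulAut A) with hψ
    haveI : Finite (MulAut A) :=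
      Finite.of_injective (fun e => (e : A → A)) DFunLike.coe_injective
    haveI : Finite ψ.range := Subtype.finite
    haveI hkerfi : ψ.ker.FiniteIndex := Subgroup.finiteIndex_ker ψ
    have hkercent : ψ.ker ≤ Subgroup.centralizer (A : Set G) := by
      intro g hg
      rw [Subgroup.mem_centralizer_iff]
      intro h hh
      have h1 : ((ψ g) ⟨h, hh⟩ : G) = g * h * g⁻¹ := MulAut.conjNormal_apply g ⟨h, hh⟩
      rw [MonoidHom.mem_ker] at hg
      rw [hg] at h1
      simp only [MulAut.one_apply] at h1
      -- h1 : h = g * h * g⁻¹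
      calc h * g = (g * h * g⁻¹) * g := by rw [← h1]
        _ = g * h := by group
    by_cases hDA : ψ.ker ⊓ P ≤ A
    · exfalso
      set Kbar := ψ.ker.map φ with hKbar
      have hKfi : Kbar.FiniteIndex := by
        constructor
        rw [← Subgroup.index_comap_of_surjective Kbar hφsurj,
          Subgroup.comap_map_eq, QuotientGroup.ker_mk']
        haveI : (ψ.ker ⊔ A).FiniteIndex := Subgroup.finiteIndex_of_le le_sup_left
        exact Subgroup.FiniteIndex.index_ne_zero
      have hBK : B ⊓ Kbar = ⊥ := by
        rw [eq_bot_iff]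
        intro x hx
        have hxB : x ∈ B := (Subgroup.mem_inf.mp hx).1
        obtain ⟨k, hk, rfl⟩ := Subgroup.mem_map.mp (Subgroup.mem_inf.mp hx).2
        have hkP : k ∈ P := hxB
        have hkA : k ∈ A := hDA (Subgroup.mem_inf.mpr ⟨hk, hkP⟩)
        rw [Subgroup.mem_bot]
        exact (QuotientGroup.eq_one_iff k).mpr hkA
      exact (finite_of_inf_finiteIndex_eq_bot B Kbar hKfi hBK).not_infinite hBinf
    · obtain ⟨c, hcmem, hcA⟩ := SetLike.not_le_iff_exists.mp hDA
      have hcker : c ∈ ψ.ker := (Subgroup.mem_inf.mp hcmem).1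
      have hcP : c ∈ P := (Subgroup.mem_inf.mp hcmem).2
      have hccent : c ∈ Subgroup.centralizer (A : Set G) := hkercent hcker
      set C := Subgroup.centralizer (A : Set G) ⊓ P with hC
      have hCnorm : C.Normal := normal_centralizer_inf hAnorm hPnorm
      set Z := Subgroup.centralizer (C : Set G) ⊓ C with hZ
      have hZnorm : Z.Normal := normal_centralizer_inf hCnorm hCnorm
      have hZcomm : ∀ x ∈ Z, ∀ y ∈ Z, x * y = y * x := by
        intro x hx y hy
        exact (Subgroup.mem_centralizer_iff.mp (Subgroup.mem_inf.mp hx).1 y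
          (Subgroup.mem_inf.mp hy).2).symm
      have hZP : Z ≤ P := fun x hx => ((Subgroup.mem_inf.mp hx).2 : x ∈ C) |>
        fun h => (Subgroup.mem_inf.mp h).2
      set e := Nat.card A with hee
      have he : 0 < e := Nat.card_pos
      have hApow : ∀ x ∈ A, x ^ e = 1 := fun x hx => pow_card_of_mem hx
      have hcC : c ∈ C := Subgroup.mem_inf.mpr ⟨hccent, hcP⟩
      have hcommA : ∀ z ∈ A, z * c = c * z := fun z hz =>
        Subgroup.mem_centralizer_iff.mp hccent z hz
      have hceZ : c ^ e ∈ Z := by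
        refine Subgroup.mem_inf.mpr ⟨?_, C.pow_mem hcC e⟩
        rw [Subgroup.mem_centralizer_iff]
        intro x hxC
        have hxP : x ∈ P := (Subgroup.mem_inf.mp hxC).2
        set z := x * c * x⁻¹ * c⁻¹ with hzdef
        have hzA : z ∈ A := by
          rw [← QuotientGroup.eq_one_iff]
          show φ z = 1
          have hφz : φ z = φ x * φ c * (φ x)⁻¹ * (φ c)⁻¹ := by
            rw [hzdef]; simp [map_mul, map_inv]
          rw [hφz, hBcomm (φ x) hxP (φ c) hcP]
          group
        have hconj : x * c * x⁻¹ = z * c := by rw [hzdef]; group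
        have hzc : Commute z c := hcommA z hzA
        have hkey : x * c ^ e * x⁻¹ = c ^ e := by
          calc x * c ^ e * x⁻¹ = (x * c * x⁻¹) ^ e := (conj_pow).symm
            _ = (z * c) ^ e := by rw [hconj]
            _ = z ^ e * c ^ e := Commute.mul_pow hzc e
            _ = c ^ e := by rw [hApow z hzA, one_mul]
        calc x * c ^ e = (x * c ^ e * x⁻¹) * x := by group
          _ = c ^ e * x := by rw [hkey]
      have hφZB : ∀ x ∈ Z, φ x ∈ B := fun x hx => hZP hx
      refine ⟨powSub Z e hZcomm, ?_, powSub_normal hZnorm, ?_, ?_⟩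
      · -- nontrivial
        intro hbot
        have hmem : (c ^ e) ^ e ∈ powSub Z e hZcomm := ⟨c ^ e, hceZ, rfl⟩
        rw [hbot, Subgroup.mem_bot] at hmem
        have hφc1 : φ c = 1 := by
          apply hBtf (φ c) hcP (e * e) (by positivity)
          have hc2 : c ^ (e * e) = 1 := by rw [pow_mul]; exact hmem
          rw [← map_pow, hc2, map_one]
        exact hcA ((QuotientGroup.eq_one_iff c).mp hφc1)
      · intro x hx y hy
        exact hZcomm x (powSub_le hx) y (powSub_le hy)
      · rintro y ⟨x, hxZ, rfl⟩ k hk hyk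
        have hφx1 : φ x = 1 := by
          apply hBtf (φ x) (hφZB x hxZ) (e * k) (by positivity)
          rw [← map_pow, pow_mul, hyk, map_one]
        have hxA : x ∈ A := (QuotientGroup.eq_one_iff x).mp hφx1
        exact hApow x hxA
  · -- `A` has an element of infinite order
    push_neg at htor
    obtain ⟨a, haA, hainf⟩ := htor
    let T : Subgroup G :=
      { carrier := {x | x ∈ A ∧ ∃ n : ℕ, 0 < n ∧ x ^ n = 1}
        one_mem' := ⟨A.one_mem, 1, one_pos, one_pow 1⟩
        mul_mem' := by
          rintro x y ⟨hxA, n, hn, hxn⟩ ⟨hyA, m, hm, hym⟩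
          refine ⟨A.mul_mem hxA hyA, n * m, by positivity, ?_⟩
          have hcxy : Commute x y := hAcomm x hxA y hyA
          rw [Commute.mul_pow hcxy, pow_mul, hxn, one_pow, one_mul,
            mul_comm n m, pow_mul, hym, one_pow]
        inv_mem' := by
          rintro x ⟨hxA, n, hn, hxn⟩
          exact ⟨A.inv_mem hxA, n, hn, by rw [inv_pow, hxn, inv_one]⟩ }
    have hTcomm : ∀ x ∈ T, ∀ y ∈ T, x * y = y * x := fun x hx y hy =>
      hAcomm x hx.1 y hy.1
    have hTtor : ∀ x ∈ T, ∃ n : ℕ, 0 < n ∧ x ^ n = 1 := fun x hx => hx.2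
    haveI hTfin : Finite T :=
      finite_of_stab_of_resfin T hres (stab_below_torsion hmm T hTcomm hTtor)
    set e := Nat.card T with hee
    have he : 0 < e := Nat.card_pos
    refine ⟨powSub A e hAcomm, ?_, powSub_normal hAnorm, ?_, ?_⟩
    · intro hbot
      have hmem : a ^ e ∈ powSub A e hAcomm := ⟨a, haA, rfl⟩
      rw [hbot, Subgroup.mem_bot] at hmem
      exact hainf e he hmem
    · intro x hx y hy
      exact hAcomm x (powSub_le hx) y (powSub_le hy)
    · rintro y ⟨x, hxA, rfl⟩ k hk hyk
      have hxT : x ∈ T := ⟨hxA, e * k, by positivity, by rw [pow_mul]; exact hyk⟩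
      exact pow_card_of_mem (A := T) hxT

/-- A finitely generated infinite solvable minimax group with trivial finite residual
has a non-trivial torsion-free abelian normal subgroup. -/
theorem exists_torsionFree_abelian_normal {G : Type*} [Group G]
    (hfg : Group.FG G) (hsolv : IsSolvable G) (hmm : Minimax G) (hinf : Infinite G)
    (hres : (⨅ (H : Subgroup G) (_ : H.FiniteIndex), H) = ⊥) :
    ∃ A : Subgroup G, A ≠ ⊥ ∧ A.Normal ∧ (∀ a ∈ A, ∀ b ∈ A, a * b = b * a) ∧
      ∀ a ∈ A, ∀ k : ℕ, 0 < k → a ^ k = 1 → a = 1 := by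
  obtain ⟨d, hd⟩ := hsolv
  exact resfin_key d G hmm hinf hres hd
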